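/- Let A_i and A_j be two different attributes (i ≠ j). Let F'_i ∈ ℱ_i and F'_j ∈ ℱ_j be failprone sets with partial(F'_i) ∩ partial(F'_j) = ∅, and put F'_{i,j} = F'_i ∩ F'_j. Then for any failprone sets F_i ∈ ℱ_i and F_j ∈ ℱ_j it holds that |F'_{i,j} ∖ (F_i ∪ F_j)| ≤ (n/(k_i k_j))·f_i·f_j + (p_i − f_i)·α_i + (p_j − f_j)·α_j. -/

import Mathlib

/-- `f_i = ⌈k_i/3⌉ − 1`: number of attribute values of `A i` with full failures. -/
noncomputable def fNum {d : ℕ} (A : Fin d → Type) [∀ j, Fintype (A j)] (i : Fin d) : ℤ :=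
  ⌈(Fintype.card (A i) : ℚ) / 3⌉ - 1

/-- `α_i = ⌈n/(6k_i)⌉ − 1`: number of partial-failure processes per attribute value. -/
noncomputable def alphaNum {d : ℕ} (A : Fin d → Type) [∀ j, Fintype (A j)] (i : Fin d) : ℤ :=
  ⌈(Fintype.card (∀ j, A j) : ℚ) / (6 * (Fintype.card (A i) : ℚ))⌉ - 1

/-- `full(F) = 𝒫|_{A_i ∈ 𝒜'}`: the full failures determined by a set `𝒜'` of values of `A i`. -/
def fullOf {d : ℕ} (A : Fin d → Type) [∀ j, Fintype (A j)] [∀ j, DecidableEq (A j)]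
    (i : Fin d) (A' : Finset (A i)) : Finset (∀ j, A j) :=
  Finset.univ.filter (fun p => p i ∈ A')

/-- `partial(F) = ⊔_{a ∈ 𝒜_i ∖ 𝒜'} X_a`: the partial failures. -/
def partialOf {d : ℕ} (A : Fin d → Type) [∀ j, Fintype (A j)] [∀ j, DecidableEq (A j)]
    (i : Fin d) (A' : Finset (A i)) (X : A i → Finset (∀ j, A j)) : Finset (∀ j, A j) :=
  A'ᶜ.biUnion X

/-- `F` decomposes as `F = full(F) ⊔ partial(F)` with witnesses `A'` (of prescribed
cardinality `fval`) and `X`, where `X a ⊆ 𝒫|_{A_i = a}` and `|X a| = α_i` for every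
`a ∈ 𝒜_i ∖ 𝒜'`. -/
noncomputable def IsDecompGen {d : ℕ} (A : Fin d → Type) [∀ j, Fintype (A j)]
    [∀ j, DecidableEq (A j)] (i : Fin d) (fval : ℤ) (F : Finset (∀ j, A j))
    (A' : Finset (A i)) (X : A i → Finset (∀ j, A j)) : Prop :=
  (A'.card : ℤ) = fval ∧
  (∀ a ∈ A'ᶜ, X a ⊆ Finset.univ.filter (fun p => p i = a)) ∧
  (∀ a ∈ A'ᶜ, ((X a).card : ℤ) = alphaNum A i) ∧
  F = fullOf A i A' ∪ partialOf A i A' X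

/-- Membership in the failprone system `ℱ_i` for `A_i`-believers. -/
noncomputable def IsFailprone {d : ℕ} (A : Fin d → Type) [∀ j, Fintype (A j)]
    [∀ j, DecidableEq (A j)] (i : Fin d) (F : Finset (∀ j, A j)) : Prop :=
  ∃ A' X, IsDecompGen A i (fNum A i) F A' X


open Finset


lemma countTwo {d : ℕ} (A : Fin d → Type) [∀ j, Fintype (A j)] [∀ j, DecidableEq (A j)]
    (i j : Fin d) (hij : i ≠ j) (S : Finset (A i)) (T : Finset (A j)) :
    (Finset.univ.filter (fun p : ∀ l, A l => p i ∈ S ∧ p j ∈ T)).card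
      = (∏ l ∈ (Finset.univ.erase i).erase j, Fintype.card (A l)) * S.card * T.card := by
  classical
  set B : ∀ l, Finset (A l) := fun l =>
    if h : i = l then h ▸ S else if h' : j = l then h' ▸ T else Finset.univ with hB
  have hBi : B i = S := by simp [hB]
  have hBj : B j = T := by simp [hB, hij]
  have hBo : ∀ l, l ≠ i → l ≠ j → B l = Finset.univ := by
    intro l h1 h2
    simp [hB, Ne.symm h1, Ne.symm h2]
  have hset : Finset.univ.filter (fun p : ∀ l, A l => p i ∈ S ∧ p j ∈ T)
      = Fintype.piFinset B := by
    ext p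
    simp only [mem_filter, mem_univ, true_and, Fintype.mem_piFinset]
    constructor
    · rintro ⟨h1, h2⟩ l
      by_cases h : l = i
      · subst h; rw [hBi]; exact h1
      · by_cases h' : l = j
        · subst h'; rw [hBj]; exact h2
        · rw [hBo l h h']; exact mem_univ _
    · intro h
      constructor
      · have := h i; rwa [hBi] at this
      · have := h j; rwa [hBj] at this
  rw [hset, Fintype.card_piFinset]
  have hjmem : j ∈ Finset.univ.erase i := by simp [hij.symm]
  rw [← Finset.mul_prod_erase Finset.univ _ (Finset.mem_univ i),
      ← Finset.mul_prod_erase _ _ hjmem, hBi, hBj]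
  have : ∏ l ∈ (Finset.univ.erase i).erase j, (B l).card
      = ∏ l ∈ (Finset.univ.erase i).erase j, Fintype.card (A l) := by
    apply Finset.prod_congr rfl
    intro l hl
    simp only [Finset.mem_erase] at hl
    rw [hBo l hl.2.1 hl.1, Finset.card_univ]
  rw [this]; ring

lemma arithFinal (m ki kj αi αj si tj di dj Mi Mj C : ℤ)
    (h0m : 0 ≤ m) (h0si : 0 ≤ si) (h0tj : 0 ≤ tj)
    (hfi : 2*(di+si) ≤ ki) (hfj : 2*(dj+tj) ≤ kj)
    (hMi1 : Mi ≤ αi) (hMi2 : Mi ≤ m * dj) (hMj1 : Mj ≤ αj) (hMj2 : Mj ≤ m * di)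
    (hC : C ≤ m * di * dj + (kj - 2*(dj+tj) + tj) * Mj + (ki - 2*(di+si) + si) * Mi) :
    C ≤ m * (di+si) * (dj+tj) + (ki - (di+si) - (di+si)) * αi
        + (kj - (dj+tj) - (dj+tj)) * αj := by
  nlinarith [mul_nonneg (by linarith : (0:ℤ) ≤ kj - 2*(dj+tj)) (by linarith : (0:ℤ) ≤ αj - Mj),
    mul_nonneg h0tj (by linarith : (0:ℤ) ≤ m*di - Mj),
    mul_nonneg (by linarith : (0:ℤ) ≤ ki - 2*(di+si)) (by linarith : (0:ℤ) ≤ αi - Mi),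
    mul_nonneg h0si (by linarith : (0:ℤ) ≤ m*dj - Mi),
    mul_nonneg (mul_nonneg h0m h0si) h0tj]

/-- Let `A i` and `A j` be two different attributes (`i ≠ j`). Let `F'_i ∈ ℱ_i` and
`F'_j ∈ ℱ_j` be failprone sets (with decompositions witnessed by `(A'_i, X_i)` and
`(A'_j, X_j)`) whose partial failures are disjoint, and put `F'_{i,j} = F'_i ∩ F'_j`.
Then for any failprone sets `F_i ∈ ℱ_i` and `F_j ∈ ℱ_j`:
`|F'_{i,j} ∖ (F_i ∪ F_j)| ≤ (n/(k_i k_j))·f_i·f_j + (p_i − f_i)·α_i + (p_j − f_j)·α_j`. -/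
theorem stmt7 (d : ℕ) (A : Fin d → Type) [∀ j, Fintype (A j)] [∀ j, DecidableEq (A j)]
    (hk : ∀ j, 4 ≤ Fintype.card (A j)) (i j : Fin d) (hij : i ≠ j)
    (F'i F'j : Finset (∀ l, A l)) (A'i : Finset (A i)) (Xi : A i → Finset (∀ l, A l))
    (A'j : Finset (A j)) (Xj : A j → Finset (∀ l, A l))
    (hF'i : IsDecompGen A i (fNum A i) F'i A'i Xi)
    (hF'j : IsDecompGen A j (fNum A j) F'j A'j Xj)
    (hdisj : partialOf A i A'i Xi ∩ partialOf A j A'j Xj = ∅)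
    (Fi Fj : Finset (∀ l, A l))
    (hFi : IsFailprone A i Fi) (hFj : IsFailprone A j Fj) :
    (((F'i ∩ F'j) \ (Fi ∪ Fj)).card : ℤ)
      ≤ (∏ l ∈ (Finset.univ.erase i).erase j, (Fintype.card (A l) : ℤ))
          * fNum A i * fNum A j
        + (((Fintype.card (A i) : ℤ) - fNum A i) - fNum A i) * alphaNum A i
        + (((Fintype.card (A j) : ℤ) - fNum A j) - fNum A j) * alphaNum A j := by
  classical
  obtain ⟨hcA'i, hXis, hXic, hEF'i⟩ := hF'i
  obtain ⟨hcA'j, hXjs, hXjc, hEF'j⟩ := hF'j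
  obtain ⟨B'i, Yi, hcB'i, hYis, hYic, hEFi⟩ := hFi
  obtain ⟨B'j, Yj, hcB'j, hYjs, hYjc, hEFj⟩ := hFj
  have hApos : ∀ l, 0 < Fintype.card (A l) := fun l => by linarith [hk l]
  have hne : ∀ l, Nonempty (A l) := fun l => Fintype.card_pos_iff.mp (hApos l)
  have hnpos : 0 < Fintype.card (∀ l, A l) := Fintype.card_pos
  have halpha : ∀ l : Fin d, 0 ≤ alphaNum A l := by
    intro l
    have hkl : (0:ℚ) < (Fintype.card (A l) : ℚ) := by exact_mod_cast hApos l
    have hnn : (0:ℚ) < (Fintype.card (∀ j, A j) : ℚ) := by exact_mod_cast hnpos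
    have hx : (0:ℚ) < (Fintype.card (∀ j, A j) : ℚ) / (6 * (Fintype.card (A l) : ℚ)) :=
      div_pos hnn (by linarith)
    have := Int.ceil_pos.mpr hx
    unfold alphaNum
    linarith
  have hfle : ∀ l : Fin d, 2 * fNum A l ≤ (Fintype.card (A l) : ℤ) := by
    intro l
    have hk4 : (4:ℚ) ≤ (Fintype.card (A l) : ℚ) := by exact_mod_cast hk l
    have hlt := Int.ceil_lt_add_one ((Fintype.card (A l) : ℚ)/3)
    have h2 : ((2 * fNum A l : ℤ) : ℚ) < ((Fintype.card (A l) : ℤ) : ℚ) := by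
      unfold fNum; push_cast; linarith
    exact (by exact_mod_cast h2 : (2 * fNum A l : ℤ) < (Fintype.card (A l) : ℤ)).le
  set m : ℕ := ∏ l ∈ (Finset.univ.erase i).erase j, Fintype.card (A l) with hm
  set Di : Finset (A i) := A'i \ B'i with hDi
  set Dj : Finset (A j) := A'j \ B'j with hDj
  set αiN : ℕ := (alphaNum A i).toNat with hαiN
  set αjN : ℕ := (alphaNum A j).toNat with hαjN
  have hαiZ : (αiN : ℤ) = alphaNum A i := Int.toNat_of_nonneg (halpha i)
  have hαjZ : (αjN : ℤ) = alphaNum A j := Int.toNat_of_nonneg (halpha j)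
  have hXi' : ∀ a, a ∉ A'i → ∀ p ∈ Xi a, p i = a := by
    intro a ha p hp
    have := hXis a (Finset.mem_compl.mpr ha) hp
    simpa using this
  have hXj' : ∀ a, a ∉ A'j → ∀ p ∈ Xj a, p j = a := by
    intro a ha p hp
    have := hXjs a (Finset.mem_compl.mpr ha) hp
    simpa using this
  have hXjcN : ∀ a, a ∉ A'j → (Xj a).card = αjN := by
    intro a ha
    have := hXjc a (Finset.mem_compl.mpr ha)
    exact_mod_cast this.trans hαjZ.symm
  have hXicN : ∀ a, a ∉ A'i → (Xi a).card = αiN := by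
    intro a ha
    have := hXic a (Finset.mem_compl.mpr ha)
    exact_mod_cast this.trans hαiZ.symm
  set S1 : Finset (∀ l, A l) :=
    Finset.univ.filter (fun p : ∀ l, A l => p i ∈ Di ∧ p j ∈ Dj) with hS1def
  set U : Finset (∀ l, A l) :=
    ((A'j ∪ B'j)ᶜ).biUnion
      (fun a => Xj a ∩ Finset.univ.filter (fun p : ∀ l, A l => p i ∈ Di)) with hUdef
  set V : Finset (∀ l, A l) :=
    ((A'i ∪ B'i)ᶜ).biUnion
      (fun a => Xi a ∩ Finset.univ.filter (fun p : ∀ l, A l => p j ∈ Dj)) with hVdef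
  have hmain : (F'i ∩ F'j) \ (Fi ∪ Fj) ⊆ S1 ∪ U ∪ V := by
    intro p hp
    rw [Finset.mem_sdiff, Finset.mem_inter] at hp
    obtain ⟨⟨hp1, hp2⟩, hp3⟩ := hp
    rw [Finset.mem_union] at hp3
    push_neg at hp3
    obtain ⟨hpFi, hpFj⟩ := hp3
    rw [hEFi, Finset.mem_union] at hpFi
    push_neg at hpFi
    have hpBi : p i ∉ B'i := fun h => hpFi.1 (by simp [fullOf, h])
    rw [hEFj, Finset.mem_union] at hpFj
    push_neg at hpFj
    have hpBj : p j ∉ B'j := fun h => hpFj.1 (by simp [fullOf, h])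
    rw [hEF'i, Finset.mem_union] at hp1
    rw [hEF'j, Finset.mem_union] at hp2
    have hp1' : p i ∈ A'i ∨ (p i ∉ A'i ∧ p ∈ Xi (p i)) := by
      rcases hp1 with h | h
      · left; simpa [fullOf] using h
      · right
        rw [partialOf, Finset.mem_biUnion] at h
        obtain ⟨a, ha, hpa⟩ := h
        rw [Finset.mem_compl] at ha
        have hpia := hXi' a ha p hpa
        subst hpia
        exact ⟨ha, hpa⟩
    have hp2' : p j ∈ A'j ∨ (p j ∉ A'j ∧ p ∈ Xj (p j)) := by
      rcases hp2 with h | h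
      · left; simpa [fullOf] using h
      · right
        rw [partialOf, Finset.mem_biUnion] at h
        obtain ⟨a, ha, hpa⟩ := h
        rw [Finset.mem_compl] at ha
        have hpja := hXj' a ha p hpa
        subst hpja
        exact ⟨ha, hpa⟩
    rcases hp1' with hAi | ⟨hnAi, hXipi⟩
    · rcases hp2' with hAj | ⟨hnAj, hXjpj⟩
      · refine Finset.mem_union_left _ (Finset.mem_union_left _ ?_)
        rw [hS1def, Finset.mem_filter]
        exact ⟨Finset.mem_univ _,
          Finset.mem_sdiff.mpr ⟨hAi, hpBi⟩, Finset.mem_sdiff.mpr ⟨hAj, hpBj⟩⟩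
      · refine Finset.mem_union_left _ (Finset.mem_union_right _ ?_)
        rw [hUdef, Finset.mem_biUnion]
        refine ⟨p j, ?_, ?_⟩
        · rw [Finset.mem_compl, Finset.mem_union]; push_neg; exact ⟨hnAj, hpBj⟩
        · rw [Finset.mem_inter, Finset.mem_filter]
          exact ⟨hXjpj, Finset.mem_univ _, Finset.mem_sdiff.mpr ⟨hAi, hpBi⟩⟩
    · rcases hp2' with hAj | ⟨hnAj, hXjpj⟩
      · refine Finset.mem_union_right _ ?_
        rw [hVdef, Finset.mem_biUnion]
        refine ⟨p i, ?_, ?_⟩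
        · rw [Finset.mem_compl, Finset.mem_union]; push_neg; exact ⟨hnAi, hpBi⟩
        · rw [Finset.mem_inter, Finset.mem_filter]
          exact ⟨hXipi, Finset.mem_univ _, Finset.mem_sdiff.mpr ⟨hAj, hpBj⟩⟩
      · exfalso
        have hmem : p ∈ partialOf A i A'i Xi ∩ partialOf A j A'j Xj := by
          rw [Finset.mem_inter, partialOf, partialOf, Finset.mem_biUnion, Finset.mem_biUnion]
          exact ⟨⟨p i, Finset.mem_compl.mpr hnAi, hXipi⟩,
                 ⟨p j, Finset.mem_compl.mpr hnAj, hXjpj⟩⟩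
        rw [hdisj] at hmem
        exact Finset.notMem_empty p hmem
  have hS1card : S1.card = m * Di.card * Dj.card := by
    rw [hS1def, hm]; exact countTwo A i j hij Di Dj
  have hUb : U.card ≤ ((A'j ∪ B'j)ᶜ).card * min αjN (m * Di.card) := by
    rw [hUdef]
    apply Finset.card_biUnion_le_card_mul
    intro a ha
    rw [Finset.mem_compl, Finset.mem_union] at ha
    push_neg at ha
    apply le_min
    · calc (Xj a ∩ Finset.univ.filter (fun p : ∀ l, A l => p i ∈ Di)).card
          ≤ (Xj a).card := Finset.card_le_card Finset.inter_subset_left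
        _ = αjN := hXjcN a ha.1
    · have hsub : Xj a ∩ Finset.univ.filter (fun p : ∀ l, A l => p i ∈ Di)
          ⊆ Finset.univ.filter (fun p : ∀ l, A l => p i ∈ Di ∧ p j ∈ ({a} : Finset (A j))) := by
        intro p hp
        rw [Finset.mem_inter, Finset.mem_filter] at hp
        rw [Finset.mem_filter]
        exact ⟨Finset.mem_univ _, hp.2.2, by simp [hXj' a ha.1 p hp.1]⟩
      calc (Xj a ∩ Finset.univ.filter (fun p : ∀ l, A l => p i ∈ Di)).card
          ≤ (Finset.univ.filter
              (fun p : ∀ l, A l => p i ∈ Di ∧ p j ∈ ({a} : Finset (A j)))).card :=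
            Finset.card_le_card hsub
        _ = m * Di.card * ({a} : Finset (A j)).card := by
            rw [hm]; exact countTwo A i j hij Di {a}
        _ = m * Di.card := by simp
  have hVb : V.card ≤ ((A'i ∪ B'i)ᶜ).card * min αiN (m * Dj.card) := by
    rw [hVdef]
    apply Finset.card_biUnion_le_card_mul
    intro a ha
    rw [Finset.mem_compl, Finset.mem_union] at ha
    push_neg at ha
    apply le_min
    · calc (Xi a ∩ Finset.univ.filter (fun p : ∀ l, A l => p j ∈ Dj)).card
          ≤ (Xi a).card := Finset.card_le_card Finset.inter_subset_left
        _ = αiN := hXicN a ha.1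
    · have hsub : Xi a ∩ Finset.univ.filter (fun p : ∀ l, A l => p j ∈ Dj)
          ⊆ Finset.univ.filter (fun p : ∀ l, A l => p i ∈ ({a} : Finset (A i)) ∧ p j ∈ Dj) := by
        intro p hp
        rw [Finset.mem_inter, Finset.mem_filter] at hp
        rw [Finset.mem_filter]
        exact ⟨Finset.mem_univ _, by simp [hXi' a ha.1 p hp.1], hp.2.2⟩
      calc (Xi a ∩ Finset.univ.filter (fun p : ∀ l, A l => p j ∈ Dj)).card
          ≤ (Finset.univ.filter
              (fun p : ∀ l, A l => p i ∈ ({a} : Finset (A i)) ∧ p j ∈ Dj)).card :=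
            Finset.card_le_card hsub
        _ = m * ({a} : Finset (A i)).card * Dj.card := by
            rw [hm]; exact countTwo A i j hij {a} Dj
        _ = m * Dj.card := by simp
  have htot : ((F'i ∩ F'j) \ (Fi ∪ Fj)).card
      ≤ m * Di.card * Dj.card + ((A'j ∪ B'j)ᶜ).card * min αjN (m * Di.card)
        + ((A'i ∪ B'i)ᶜ).card * min αiN (m * Dj.card) := by
    calc ((F'i ∩ F'j) \ (Fi ∪ Fj)).card ≤ (S1 ∪ U ∪ V).card := Finset.card_le_card hmain
      _ ≤ (S1 ∪ U).card + V.card := Finset.card_union_le _ _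
      _ ≤ S1.card + U.card + V.card := add_le_add_left (Finset.card_union_le _ _) _
      _ ≤ _ := by rw [hS1card]; exact add_le_add (add_le_add le_rfl hUb) hVb
  -- cast identities
  have hdsiZ : (Di.card : ℤ) + ((A'i ∩ B'i).card : ℤ) = fNum A i := by
    have h := Finset.card_inter_add_card_sdiff A'i B'i
    have h2 : (A'i \ B'i).card + (A'i ∩ B'i).card = A'i.card := by omega
    rw [← hcA'i, hDi]
    exact_mod_cast h2
  have hdsjZ : (Dj.card : ℤ) + ((A'j ∩ B'j).card : ℤ) = fNum A j := by
    have h := Finset.card_inter_add_card_sdiff A'j B'j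
    have h2 : (A'j \ B'j).card + (A'j ∩ B'j).card = A'j.card := by omega
    rw [← hcA'j, hDj]
    exact_mod_cast h2
  have hciZ : ((((A'i ∪ B'i)ᶜ).card : ℤ))
      = (Fintype.card (A i) : ℤ)
        - 2*((Di.card : ℤ) + ((A'i ∩ B'i).card : ℤ)) + ((A'i ∩ B'i).card : ℤ) := by
    have e1 : ((A'i ∪ B'i).card : ℤ) + ((A'i ∩ B'i).card : ℤ)
        = (A'i.card : ℤ) + (B'i.card : ℤ) := by
      exact_mod_cast Finset.card_union_add_card_inter A'i B'i
    have e2 : ((A'i ∪ B'i).card : ℤ) + (((A'i ∪ B'i)ᶜ).card : ℤ)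
        = (Fintype.card (A i) : ℤ) := by
      exact_mod_cast Finset.card_add_card_compl (A'i ∪ B'i)
    rw [hdsiZ]
    linarith [hcA'i, hcB'i]
  have hcjZ : ((((A'j ∪ B'j)ᶜ).card : ℤ))
      = (Fintype.card (A j) : ℤ)
        - 2*((Dj.card : ℤ) + ((A'j ∩ B'j).card : ℤ)) + ((A'j ∩ B'j).card : ℤ) := by
    have e1 : ((A'j ∪ B'j).card : ℤ) + ((A'j ∩ B'j).card : ℤ)
        = (A'j.card : ℤ) + (B'j.card : ℤ) := by
      exact_mod_cast Finset.card_union_add_card_inter A'j B'j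
    have e2 : ((A'j ∪ B'j).card : ℤ) + (((A'j ∪ B'j)ᶜ).card : ℤ)
        = (Fintype.card (A j) : ℤ) := by
      exact_mod_cast Finset.card_add_card_compl (A'j ∪ B'j)
    rw [hdsjZ]
    linarith [hcA'j, hcB'j]
  have hHZ : (((F'i ∩ F'j) \ (Fi ∪ Fj)).card : ℤ)
      ≤ (m : ℤ) * (Di.card : ℤ) * (Dj.card : ℤ)
        + (((A'j ∪ B'j)ᶜ).card : ℤ) * ((min αjN (m * Di.card) : ℕ) : ℤ)
        + (((A'i ∪ B'i)ᶜ).card : ℤ) * ((min αiN (m * Dj.card) : ℕ) : ℤ) := by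
    exact_mod_cast htot
  rw [hcjZ, hciZ] at hHZ
  have hprod : (∏ l ∈ (Finset.univ.erase i).erase j, ((Fintype.card (A l)) : ℤ)) = (m : ℤ) := by
    rw [hm]; push_cast; rfl
  have hfiZ : 2 * ((Di.card : ℤ) + ((A'i ∩ B'i).card : ℤ)) ≤ (Fintype.card (A i) : ℤ) := by
    rw [hdsiZ]; exact hfle i
  have hfjZ : 2 * ((Dj.card : ℤ) + ((A'j ∩ B'j).card : ℤ)) ≤ (Fintype.card (A j) : ℤ) := by
    rw [hdsjZ]; exact hfle j
  have hMi1 : ((min αiN (m * Dj.card) : ℕ) : ℤ) ≤ alphaNum A i := by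
    rw [← hαiZ]; exact_mod_cast Nat.min_le_left _ _
  have hMi2 : ((min αiN (m * Dj.card) : ℕ) : ℤ) ≤ (m : ℤ) * (Dj.card : ℤ) := by
    exact_mod_cast Nat.min_le_right αiN (m * Dj.card)
  have hMj1 : ((min αjN (m * Di.card) : ℕ) : ℤ) ≤ alphaNum A j := by
    rw [← hαjZ]; exact_mod_cast Nat.min_le_left _ _
  have hMj2 : ((min αjN (m * Di.card) : ℕ) : ℤ) ≤ (m : ℤ) * (Di.card : ℤ) := by
    exact_mod_cast Nat.min_le_right αjN (m * Di.card)
  rw [hprod, ← hdsiZ, ← hdsjZ]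
  exact arithFinal (m : ℤ) (Fintype.card (A i)) (Fintype.card (A j))
    (alphaNum A i) (alphaNum A j)
    ((A'i ∩ B'i).card) ((A'j ∩ B'j).card) (Di.card) (Dj.card)
    ((min αiN (m * Dj.card) : ℕ)) ((min αjN (m * Di.card) : ℕ)) _
    (Int.natCast_nonneg m) (Int.natCast_nonneg _) (Int.natCast_nonneg _)
    hfiZ hfjZ hMi1 hMi2 hMj1 hMj2 hHZ
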